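/- Let δ > 0, T > 0, and let M, N : [0,T) → ℝ be differentiable with N(t) > 0, M'(t) ≤ −M(t)² + δN(t), and N'(t) = −M(t)N(t) for all t ∈ [0,T). Then for every t ∈ [0,T): 0 < 1/N(t) ≤ 1/N(0) + (M(0)/N(0)) t + (δ/2) t². -/

import Mathlib

open Set

/-- Riccati-type comparison: if `N > 0`, `M' ≤ -M² + δN` and `N' = -MN` on
`[0,T)`, then `0 < 1/N(t) ≤ 1/N(0) + (M(0)/N(0)) t + (δ/2) t²`. -/
theorem riccati_inverse_bound (δ T : ℝ) (hδ : 0 < δ) (hT : 0 < T)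
    (M N M' : ℝ → ℝ)
    (hNpos : ∀ t ∈ Ico (0:ℝ) T, 0 < N t)
    (hM : ∀ t ∈ Ico (0:ℝ) T, HasDerivAt M (M' t) t)
    (hM' : ∀ t ∈ Ico (0:ℝ) T, M' t ≤ -(M t) ^ 2 + δ * N t)
    (hN : ∀ t ∈ Ico (0:ℝ) T, HasDerivAt N (-(M t * N t)) t) :
    ∀ t ∈ Ico (0:ℝ) T,
      0 < 1 / N t ∧ 1 / N t ≤ 1 / N 0 + (M 0 / N 0) * t + (δ / 2) * t ^ 2 := by
  have hconv : Convex ℝ (Ico (0:ℝ) T) := convex_Ico 0 T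
  have h0s : (0:ℝ) ∈ Ico (0:ℝ) T := ⟨le_refl 0, hT⟩
  -- Step 1: F = M/N - δ t is antitone
  set F : ℝ → ℝ := fun t => M t / N t - δ * t with hFdef
  have hFderiv : ∀ x ∈ Ico (0:ℝ) T,
      HasDerivAt F ((M' x * N x - M x * (-(M x * N x))) / (N x) ^ 2 - δ) x := by
    intro x hx
    have h1 := (hM x hx).div (hN x hx) (hNpos x hx).ne'
    have h2 : HasDerivAt (fun t : ℝ => δ * t) δ x := by
      simpa using (hasDerivAt_id x).const_mul δ
    exact h1.sub h2
  have hFcont : ContinuousOn F (Ico (0:ℝ) T) := fun x hx =>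
    ((hFderiv x hx).continuousAt).continuousWithinAt
  have hFanti : AntitoneOn F (Ico (0:ℝ) T) := by
    apply antitoneOn_of_deriv_nonpos hconv hFcont
    · intro x hx
      rw [interior_Ico] at hx
      exact ((hFderiv x (Ioo_subset_Ico_self hx)).differentiableAt).differentiableWithinAt
    intro x hx
    rw [interior_Ico] at hx
    have hx' : x ∈ Ico (0:ℝ) T := Ioo_subset_Ico_self hx
    rw [(hFderiv x hx').deriv]
    have hNx := hNpos x hx'
    have hkey : M' x + M x ^ 2 ≤ δ * N x := by linarith [hM' x hx']
    have heq : (M' x * N x - M x * (-(M x * N x))) / (N x) ^ 2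
        = (M' x + M x ^ 2) / N x := by
      field_simp
      ring
    rw [heq]
    have : (M' x + M x ^ 2) / N x ≤ δ := by
      rw [div_le_iff₀ hNx]
      linarith
    linarith
  have hFle : ∀ x ∈ Ico (0:ℝ) T, M x / N x ≤ M 0 / N 0 + δ * x := by
    intro x hx
    have := hFanti h0s hx hx.1
    simp only [hFdef] at this
    nlinarith [this]
  -- Step 2: G = 1/N - (1/N 0 + (M 0/N 0) t + δ/2 t²) is antitone
  set G : ℝ → ℝ := fun t => 1 / N t - (1 / N 0 + (M 0 / N 0) * t + (δ / 2) * t ^ 2)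
    with hGdef
  have hGderiv : ∀ x ∈ Ico (0:ℝ) T,
      HasDerivAt G (M x / N x - (M 0 / N 0 + δ * x)) x := by
    intro x hx
    have hNx := hNpos x hx
    have h1 : HasDerivAt (fun t => 1 / N t) (M x / N x) x := by
      have h := (hN x hx).inv hNx.ne'
      have heq : -(-(M x * N x)) / (N x) ^ 2 = M x / N x := by
        field_simp
      simp only [one_div]
      rw [← heq]
      exact h
    have h2 : HasDerivAt (fun t : ℝ => 1 / N 0 + (M 0 / N 0) * t + (δ / 2) * t ^ 2)
        (M 0 / N 0 + δ * x) x := by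
      have ha : HasDerivAt (fun t : ℝ => (M 0 / N 0) * t) (M 0 / N 0) x := by
        simpa using (hasDerivAt_id x).const_mul (M 0 / N 0)
      have hb : HasDerivAt (fun t : ℝ => (δ / 2) * t ^ 2) (δ * x) x := by
        have := (hasDerivAt_pow 2 x).const_mul (δ / 2)
        refine this.congr_deriv ?_
        push_cast
        ring
      have := ((hasDerivAt_const x (1 / N 0)).add ha).add hb
      refine this.congr_deriv ?_
      ring
    exact h1.sub h2
  have hGcont : ContinuousOn G (Ico (0:ℝ) T) := fun x hx =>
    ((hGderiv x hx).continuousAt).continuousWithinAt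
  have hGanti : AntitoneOn G (Ico (0:ℝ) T) := by
    apply antitoneOn_of_deriv_nonpos hconv hGcont
    · intro x hx
      rw [interior_Ico] at hx
      exact ((hGderiv x (Ioo_subset_Ico_self hx)).differentiableAt).differentiableWithinAt
    intro x hx
    rw [interior_Ico] at hx
    have hx' : x ∈ Ico (0:ℝ) T := Ioo_subset_Ico_self hx
    rw [(hGderiv x hx').deriv]
    have := hFle x hx'
    linarith
  intro t ht
  have hNt := hNpos t ht
  refine ⟨by positivity, ?_⟩
  have := hGanti h0s ht ht.1
  simp only [hGdef] at this
  nlinarith [this]
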